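/- Let y ∈ {0,1}^ℕ be the binary sequence obtained by concatenating the blocks g(1) g(2) g(3) …, where for n ≥ 1 with λ(n) = ⌊log₂ n⌋ + 1 (the length of the binary representation of n), g(n) = 1^{λ(n)} if n = 2^k − 1 for some k ≥ 1, and g(n) = 0^{λ(n)} otherwise. Then y is typical, i.e. lim_{n→∞} L_n(y)/log₂ n = 1. -/

import Mathlib

open Filter

open Classical in
/-- `L_n(x)`: the maximal length of a run of consecutive ones among the first `n`
digits (positions `1,…,n`) of the binary sequence `x`. -/
noncomputable def runL (x : ℕ → Bool) (n : ℕ) : ℕ :=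
  Nat.findGreatest
    (fun j => ∃ i, i + j ≤ n ∧ ∀ k, 1 ≤ k → k ≤ j → x (i + k) = true) n

/-- A binary sequence is typical if `L_n(x)/log₂ n → 1`. -/
def Typical (x : ℕ → Bool) : Prop :=
  Tendsto (fun n : ℕ => (runL x n : ℝ) / Real.logb 2 (n : ℝ)) atTop (nhds 1)

/-- The infinite binary sequence (indexed from 1) obtained by concatenating
the nonempty blocks `b 1, b 2, b 3, …`. -/
def concatSeq (b : ℕ → List Bool) : ℕ → Bool :=
  fun i => (((List.range i).map fun k => b (k + 1)).flatten).getD (i - 1) false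

open Classical in
/-- The block `g(n)`: with `λ(n) = ⌊log₂ n⌋ + 1` the length of the binary
representation of `n`, `g(n) = 1^{λ(n)}` if `n = 2^k − 1` for some `k ≥ 1`,
and `g(n) = 0^{λ(n)}` otherwise. -/
noncomputable def gblock (n : ℕ) : List Bool :=
  if ∃ k, 1 ≤ k ∧ n = 2 ^ k - 1 then List.replicate (Nat.log 2 n + 1) true
  else List.replicate (Nat.log 2 n + 1) false

namespace GG

noncomputable def S (n : ℕ) : ℕ := ∑ m ∈ Finset.range n, (Nat.log 2 (m+1) + 1)

noncomputable def F (n : ℕ) : List Bool :=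
  ((List.range n).map fun k => gblock (k + 1)).flatten

lemma gblock_length (n : ℕ) : (gblock n).length = Nat.log 2 n + 1 := by
  unfold gblock; split <;> simp

lemma S_succ (n : ℕ) : S (n+1) = S n + (Nat.log 2 (n+1) + 1) := by
  unfold S; rw [Finset.sum_range_succ]

lemma le_S (n : ℕ) : n ≤ S n := by
  induction n with
  | zero => simp [S]
  | succ n ih => rw [S_succ]; omega

lemma S_strictMono : StrictMono S := by
  apply strictMono_nat_of_lt_succ
  intro n; rw [S_succ]; omega

lemma F_succ (n : ℕ) : F (n+1) = F n ++ gblock (n+1) := by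
  unfold F; rw [List.range_succ]; simp

lemma F_length (n : ℕ) : (F n).length = S n := by
  induction n with
  | zero => simp [F, S]
  | succ n ih =>
    rw [F_succ, List.length_append, ih, gblock_length, S_succ]

lemma F_prefix {a b : ℕ} (h : a ≤ b) : ∃ t, F b = F a ++ t := by
  induction b with
  | zero => exact ⟨[], by simp [Nat.le_zero.mp h]⟩
  | succ b ih =>
    rcases Nat.lt_or_ge a (b+1) with h' | h'
    · obtain ⟨t, ht⟩ := ih (by omega)
      exact ⟨t ++ gblock (b+1), by rw [F_succ, ht, List.append_assoc]⟩
    · have : a = b+1 := by omega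
      subst this; exact ⟨[], by simp⟩

lemma y_eq {n i : ℕ} (h1 : 1 ≤ i) (h2 : i ≤ S n) :
    concatSeq gblock i = (F n).getD (i-1) false := by
  show (F i).getD (i-1) false = _
  rcases le_total i n with h | h
  · obtain ⟨t, ht⟩ := F_prefix h
    rw [ht, List.getD_append _ _ _ _ (by rw [F_length]; have := le_S i; omega)]
  · obtain ⟨t, ht⟩ := F_prefix h
    rw [ht, List.getD_append _ _ _ _ (by rw [F_length]; omega)]

lemma y_block_true {m i : ℕ} (h1 : S m < i) (h2 : i ≤ S (m+1))
    (h : ∃ k, 1 ≤ k ∧ m + 1 = 2 ^ k - 1) :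
    concatSeq gblock i = true := by
  rw [y_eq (by have := le_S m; omega) h2, F_succ,
    List.getD_append_right _ _ _ _ (by rw [F_length]; omega)]
  rw [F_length]
  unfold gblock
  rw [if_pos h]
  have hlt : i - 1 - S m < Nat.log 2 (m+1) + 1 := by have := S_succ m; omega
  rw [List.getD_eq_getElem _ _ (by simpa using hlt), List.getElem_replicate]

lemma y_block_false {m i : ℕ} (h1 : S m < i) (h2 : i ≤ S (m+1))
    (h : ¬ ∃ k, 1 ≤ k ∧ m + 1 = 2 ^ k - 1) :
    concatSeq gblock i = false := by
  rw [y_eq (by have := le_S m; omega) h2, F_succ,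
    List.getD_append_right _ _ _ _ (by rw [F_length]; omega)]
  rw [F_length]
  unfold gblock
  rw [if_neg h]
  have hlt : i - 1 - S m < Nat.log 2 (m+1) + 1 := by have := S_succ m; omega
  rw [List.getD_eq_getElem _ _ (by simpa using hlt), List.getElem_replicate]

end GG

namespace GG2
open GG

lemma log_pow_sub_one {r : ℕ} (hr : 1 ≤ r) : Nat.log 2 (2^r - 1) = r - 1 := by
  obtain ⟨s, rfl⟩ : ∃ s, r = s + 1 := ⟨r - 1, by omega⟩
  have h2 : (2:ℕ)^(s+1) = 2 * 2^s := by ring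
  have h1 : (1:ℕ) ≤ 2^s := Nat.one_le_two_pow
  simp only [Nat.add_sub_cancel]
  exact Nat.log_eq_of_pow_le_of_lt_pow (by omega) (by omega)

lemma two_le_pow {r : ℕ} (hr : 1 ≤ r) : 2 ≤ 2^r := by
  calc 2 = 2^1 := (pow_one 2).symm
  _ ≤ 2^r := Nat.pow_le_pow_right (by norm_num) hr

lemma S_block {r : ℕ} (hr : 1 ≤ r) : S (2^r - 1) = S (2^r - 2) + r := by
  have h2 := two_le_pow hr
  have : 2^r - 1 = (2^r - 2) + 1 := by omega
  rw [this, S_succ]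
  have : 2^r - 2 + 1 = 2^r - 1 := by omega
  rw [this, log_pow_sub_one hr]
  omega

lemma runL_ge {k n : ℕ} (hk : 1 ≤ k) (hn : S (2^k - 1) ≤ n) :
    k ≤ runL (concatSeq gblock) n := by
  have hkS : k ≤ S (2^k - 1) := le_trans (by have := Nat.lt_two_pow_self (n := k); omega)
    (le_S _)
  classical
  unfold runL
  apply Nat.le_findGreatest (le_trans hkS hn)
  refine ⟨S (2^k - 2), by have := S_block hk; omega, fun t ht1 ht2 => ?_⟩
  have h2 := two_le_pow hk
  have hm : (2^k - 2) + 1 = 2^k - 1 := by omega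
  apply y_block_true (m := 2^k - 2)
  · omega
  · rw [hm, S_block hk]; omega
  · exact ⟨k, hk, by omega⟩

lemma runL_le {K n : ℕ} (hn : n ≤ S (2^K - 1)) :
    runL (concatSeq gblock) n ≤ K := by
  classical
  by_contra hcon
  push_neg at hcon
  unfold runL at hcon
  set j := Nat.findGreatest
    (fun j => ∃ i, i + j ≤ n ∧ ∀ k, 1 ≤ k → k ≤ j → concatSeq gblock (i + k) = true) n with hj
  obtain ⟨i, hin, hall⟩ := Nat.findGreatest_of_ne_zero
    (P := fun j => ∃ i, i + j ≤ n ∧ ∀ k, 1 ≤ k → k ≤ j → concatSeq gblock (i + k) = true)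
    hj.symm (by omega)
  set p := i + 1 with hp
  have hpn : p ≤ n := by omega
  have hyp : concatSeq gblock p = true := hall 1 le_rfl (by omega)
  set m := Nat.findGreatest (fun m => S m < p) p with hmdef
  have hm1 : S m < p := by
    rcases Nat.eq_zero_or_pos m with h0 | h0
    · rw [h0]; simp [S]; omega
    · exact Nat.findGreatest_of_ne_zero (P := fun m => S m < p) hmdef.symm (by omega)
  have hm2 : p ≤ S (m + 1) := by
    by_contra hc
    push_neg at hc
    have hmp : m + 1 ≤ p := le_trans (le_S _) (by omega)
    exact Nat.findGreatest_is_greatest (P := fun m => S m < p) (n := p)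
      (k := m + 1) (by omega) hmp hc
  obtain ⟨r, hr1, hr2⟩ : ∃ r, 1 ≤ r ∧ m + 1 = 2^r - 1 := by
    by_contra hc
    rw [y_block_false hm1 hm2 hc] at hyp
    exact Bool.false_ne_true hyp
  have h2r := two_le_pow hr1
  have hK1 : (1:ℕ) ≤ 2^K := Nat.one_le_two_pow
  have hmK : m < 2^K - 1 := by
    have : S m < S (2^K - 1) := by omega
    exact S_strictMono.lt_iff_lt.mp this
  have hrK : r ≤ K := by
    have : (2:ℕ)^r ≤ 2^K := by omega
    exact (Nat.pow_le_pow_iff_right (by norm_num)).mp this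
  have hend : i + j ≤ S (m + 1) := by
    by_contra hc
    push_neg at hc
    have ht1 : 1 ≤ S (m + 1) + 1 - i := by omega
    have ht2 : S (m + 1) + 1 - i ≤ j := by omega
    have hval := hall (S (m + 1) + 1 - i) ht1 ht2
    have hiq : i + (S (m + 1) + 1 - i) = S (m + 1) + 1 := by omega
    rw [hiq] at hval
    have hq2 : S (m + 1) + 1 ≤ S (m + 1 + 1) := by have := S_succ (m + 1); omega
    have hblock : ¬ ∃ t, 1 ≤ t ∧ m + 1 + 1 = 2^t - 1 := by
      rintro ⟨t, ht, hteq⟩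
      have h2t := two_le_pow ht
      have hdvd1 : 2 ∣ 2^r := dvd_pow_self 2 (by omega)
      have hdvd2 : 2 ∣ 2^t := dvd_pow_self 2 (by omega)
      omega
    rw [y_block_false (m := m + 1) (by omega) hq2 hblock] at hval
    exact Bool.false_ne_true hval
  have hlen : S (m + 1) = S m + r := by
    have hm' : 2^r - 2 = m := by omega
    rw [hr2, S_block hr1, hm']
  omega

lemma S_le_mul (N : ℕ) : S N ≤ N * (Nat.log 2 N + 1) := by
  unfold S
  calc ∑ m ∈ Finset.range N, (Nat.log 2 (m+1) + 1)
      ≤ ∑ _m ∈ Finset.range N, (Nat.log 2 N + 1) := by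
        apply Finset.sum_le_sum
        intro i hi
        have h1 : i + 1 ≤ N := Finset.mem_range.mp hi
        exact Nat.add_le_add_right (Nat.log_mono_right h1) 1
    _ = N * (Nat.log 2 N + 1) := by
        rw [Finset.sum_const, Finset.card_range, smul_eq_mul]

noncomputable def kf (n : ℕ) : ℕ := Nat.findGreatest (fun k => S (2^k - 1) ≤ n) n

lemma kf_def (n : ℕ) : kf n = Nat.findGreatest (fun k => S (2^k - 1) ≤ n) n := rfl

lemma kf_ge {K n : ℕ} (h : S (2^K - 1) ≤ n) : K ≤ kf n :=
  Nat.le_findGreatest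
    (le_trans (le_trans (by have := Nat.lt_two_pow_self (n := K); omega) (le_S _)) h) h

lemma E_kf_le {n : ℕ} : S (2^(kf n) - 1) ≤ n := by
  rcases Nat.eq_zero_or_pos (kf n) with h0 | h0
  · rw [h0]; simp [S]
  · exact Nat.findGreatest_of_ne_zero (P := fun k => S (2^k - 1) ≤ n) (kf_def n).symm (by omega)

lemma lt_E_kf {n : ℕ} : n < S (2^(kf n + 1) - 1) := by
  by_contra hc
  push_neg at hc
  have hb : kf n + 1 ≤ n :=
    le_trans (le_trans (by have := Nat.lt_two_pow_self (n := kf n + 1); omega) (le_S _)) hc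
  exact Nat.findGreatest_is_greatest (P := fun k => S (2^k - 1) ≤ n) (n := n)
    (k := kf n + 1) (by rw [← kf_def]; omega) hb hc

lemma kf_tendsto : Tendsto kf atTop atTop := by
  rw [tendsto_atTop_atTop]
  intro b
  exact ⟨S (2^(b+1) - 1), fun n hn => le_trans (Nat.le_succ b) (kf_ge hn)⟩

-- analytic lemmas
lemma aux_log_div : Tendsto (fun x : ℝ => Real.log (x+1) / x) atTop (nhds 0) := by
  have h1 : Tendsto (fun x : ℝ => Real.log (x+1) / (x+1)) atTop (nhds 0) :=
    Real.isLittleO_log_id_atTop.tendsto_div_nhds_zero.comp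
      (tendsto_atTop_add_const_right _ 1 tendsto_id)
  have h2 : Tendsto (fun x : ℝ => (x+1) / x) atTop (nhds 1) := by
    have : Tendsto (fun x : ℝ => 1 + x⁻¹) atTop (nhds 1) := by
      simpa using (tendsto_const_nhds : Tendsto (fun _ : ℝ => (1:ℝ)) atTop (nhds 1)).add
        tendsto_inv_atTop_zero
    apply this.congr'
    filter_upwards [eventually_gt_atTop (0:ℝ)] with x hx
    field_simp
  have := h1.mul h2
  rw [zero_mul] at this
  apply this.congr'
  filter_upwards [eventually_gt_atTop (0:ℝ)] with x hx
  have h1x : x + 1 ≠ 0 := by linarith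
  field_simp

lemma aux_logb_div : Tendsto (fun x : ℝ => Real.logb 2 (x+1) / x) atTop (nhds 0) := by
  have := aux_log_div.mul_const (Real.log 2)⁻¹
  rw [zero_mul] at this
  apply this.congr
  intro x
  rw [Real.logb]
  ring

lemma tendstoU : Tendsto (fun k : ℕ => ((k:ℝ)+1)/((k:ℝ)-1)) atTop (nhds 1) := by
  have hr : Tendsto (fun x : ℝ => (x+1)/(x-1)) atTop (nhds 1) := by
    have h0 : Tendsto (fun x : ℝ => 1 + 2/(x-1)) atTop (nhds 1) := by
      have h2 : Tendsto (fun x : ℝ => 2/(x-1)) atTop (nhds 0) :=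
        Tendsto.div_atTop tendsto_const_nhds (tendsto_atTop_add_const_right _ (-1) tendsto_id)
      simpa using (tendsto_const_nhds : Tendsto (fun _ : ℝ => (1:ℝ)) atTop (nhds 1)).add h2
    apply h0.congr'
    filter_upwards [eventually_gt_atTop (1:ℝ)] with x hx
    have hx' : x - 1 ≠ 0 := by linarith
    field_simp
    ring
  exact hr.comp tendsto_natCast_atTop_atTop

lemma tendstoL :
    Tendsto (fun k : ℕ => (k:ℝ)/((k:ℝ)+1+Real.logb 2 ((k:ℝ)+1))) atTop (nhds 1) := by
  have hr : Tendsto (fun x : ℝ => x/(x+1+Real.logb 2 (x+1))) atTop (nhds 1) := by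
    have hden : Tendsto (fun x : ℝ => (x+1+Real.logb 2 (x+1))/x) atTop (nhds 1) := by
      have h0 : Tendsto (fun x : ℝ => 1 + x⁻¹ + Real.logb 2 (x+1)/x) atTop (nhds 1) := by
        have := ((tendsto_const_nhds : Tendsto (fun _ : ℝ => (1:ℝ)) atTop (nhds 1)).add
          tendsto_inv_atTop_zero).add aux_logb_div
        simpa using this
      apply h0.congr'
      filter_upwards [eventually_gt_atTop (0:ℝ)] with x hx
      field_simp
    have := hden.inv₀ one_ne_zero
    rw [inv_one] at this
    apply this.congr
    intro x
    rw [inv_div]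
  exact hr.comp tendsto_natCast_atTop_atTop

end GG2

namespace GG3
open GG GG2

lemma main_bounds {n : ℕ} (hn : S (2^2 - 1) ≤ n) :
    (kf n : ℝ)/((kf n : ℝ)+1+Real.logb 2 ((kf n : ℝ)+1))
      ≤ (runL (concatSeq gblock) n : ℝ) / Real.logb 2 (n : ℝ) ∧
    (runL (concatSeq gblock) n : ℝ) / Real.logb 2 (n : ℝ)
      ≤ ((kf n : ℝ)+1)/((kf n : ℝ)-1) := by
  set k := kf n with hk
  have hk2 : 2 ≤ k := kf_ge hn
  have hE : S (2^k - 1) ≤ n := E_kf_le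
  have hE' : n < S (2^(k+1) - 1) := lt_E_kf
  have hrun1 : k ≤ runL (concatSeq gblock) n := runL_ge (by omega) hE
  have hrun2 : runL (concatSeq gblock) n ≤ k + 1 := runL_le (le_of_lt hE')
  have hnlow : 2^(k-1) ≤ n := by
    have h2k : (2:ℕ)^k = 2 * 2^(k-1) := by
      rw [← pow_succ']
      congr 1
      omega
    have hS := le_S (2^k - 1)
    have h1 : (1:ℕ) ≤ 2^(k-1) := Nat.one_le_two_pow
    omega
  have hnhigh : n ≤ 2^(k+1) * (k+1) := by
    have h1 : S (2^(k+1) - 1) ≤ (2^(k+1) - 1) * (Nat.log 2 (2^(k+1) - 1) + 1) := S_le_mul _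
    rw [log_pow_sub_one (by omega)] at h1
    have h2 : (2:ℕ) ≤ 2^(k+1) := two_le_pow (by omega)
    have h3 : (2^(k+1) - 1) * (k + 1 - 1 + 1) ≤ 2^(k+1) * (k+1) := by
      apply Nat.mul_le_mul <;> omega
    omega
  have hn1 : 1 ≤ n := le_trans (by have := le_S (2^2-1); norm_num at this ⊢; omega) hn
  have hnR : (0:ℝ) < (n:ℝ) := by exact_mod_cast hn1
  have hlog1 : ((k:ℝ) - 1) ≤ Real.logb 2 (n:ℝ) := by
    have hcast : ((2:ℝ))^(k-1) ≤ (n:ℝ) := by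
      calc ((2:ℝ))^(k-1) = ((2^(k-1) : ℕ) : ℝ) := by push_cast; ring
        _ ≤ (n:ℝ) := Nat.cast_le.mpr hnlow
    calc ((k:ℝ) - 1) = Real.logb 2 ((2:ℝ)^(k-1)) := by
          rw [Real.logb_pow, Real.logb_self_eq_one (by norm_num)]
          rw [Nat.cast_sub (show 1 ≤ k by omega)]
          push_cast
          ring
      _ ≤ Real.logb 2 (n:ℝ) := Real.logb_le_logb_of_le (by norm_num) (by positivity) hcast
  have hlog2 : Real.logb 2 (n:ℝ) ≤ (k:ℝ) + 1 + Real.logb 2 ((k:ℝ)+1) := by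
    have hcast : (n:ℝ) ≤ (2:ℝ)^(k+1) * ((k:ℝ)+1) := by
      calc (n:ℝ) ≤ ((2^(k+1) * (k+1) : ℕ) : ℝ) := Nat.cast_le.mpr hnhigh
        _ = (2:ℝ)^(k+1) * ((k:ℝ)+1) := by push_cast; ring
    calc Real.logb 2 (n:ℝ) ≤ Real.logb 2 ((2:ℝ)^(k+1) * ((k:ℝ)+1)) :=
          Real.logb_le_logb_of_le (by norm_num) hnR hcast
      _ = (k:ℝ) + 1 + Real.logb 2 ((k:ℝ)+1) := by
          rw [Real.logb_mul (by positivity) (by positivity), Real.logb_pow,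
            Real.logb_self_eq_one (by norm_num)]
          push_cast
          ring
  have hlogpos : 0 < Real.logb 2 (n:ℝ) := by
    have : (1:ℝ) ≤ (k:ℝ) - 1 := by
      have : (2:ℝ) ≤ (k:ℝ) := by exact_mod_cast hk2
      linarith
    linarith
  have hkR : (0:ℝ) < (k:ℝ) - 1 := by
    have : (2:ℝ) ≤ (k:ℝ) := by exact_mod_cast hk2
    linarith
  have h1 : (k:ℝ) ≤ (runL (concatSeq gblock) n : ℝ) := by exact_mod_cast hrun1
  have h2 : (runL (concatSeq gblock) n : ℝ) ≤ (k:ℝ) + 1 := by exact_mod_cast hrun2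
  constructor
  · calc (k:ℝ)/((k:ℝ)+1+Real.logb 2 ((k:ℝ)+1))
        ≤ (k:ℝ)/Real.logb 2 (n:ℝ) :=
          div_le_div_of_nonneg_left (by positivity) hlogpos hlog2
      _ ≤ (runL (concatSeq gblock) n : ℝ) / Real.logb 2 (n:ℝ) :=
          (div_le_div_iff_of_pos_right hlogpos).mpr h1
  · calc (runL (concatSeq gblock) n : ℝ) / Real.logb 2 (n:ℝ)
        ≤ ((k:ℝ)+1) / Real.logb 2 (n:ℝ) := (div_le_div_iff_of_pos_right hlogpos).mpr h2
      _ ≤ ((k:ℝ)+1)/((k:ℝ)-1) :=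
          div_le_div_of_nonneg_left (by positivity) hkR hlog1


end GG3

/-- The sequence `y = g(1) g(2) g(3) … = 1 00 11 000 000 000 111 …` is
typical: `L_n(y)/log₂ n → 1`. -/
theorem gseq_typical : Typical (concatSeq gblock) := by
  unfold Typical
  have hL : Tendsto (fun n : ℕ =>
      (GG2.kf n : ℝ)/((GG2.kf n : ℝ)+1+Real.logb 2 ((GG2.kf n : ℝ)+1))) atTop (nhds 1) :=
    GG2.tendstoL.comp GG2.kf_tendsto
  have hU : Tendsto (fun n : ℕ => ((GG2.kf n : ℝ)+1)/((GG2.kf n : ℝ)-1)) atTop (nhds 1) :=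
    GG2.tendstoU.comp GG2.kf_tendsto
  apply tendsto_of_tendsto_of_tendsto_of_le_of_le' hL hU
  · filter_upwards [eventually_ge_atTop (GG.S (2^2 - 1))] with n hn
    exact (GG3.main_bounds hn).1
  · filter_upwards [eventually_ge_atTop (GG.S (2^2 - 1))] with n hn
    exact (GG3.main_bounds hn).2
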